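/- arXiv:1206.1496 — 2 statements merged into one kernel-verified Lean document; each statement's English description precedes it below -/
import Mathlib

section
/- Ball–floor collision formulas: with G = diag(m,m,m,J,J,J), B = [[1,0,0,0,−r,0],[0,1,0,r,0,0],[0,0,1,0,0,0]] and P = G⁻¹Bᵀ(BG⁻¹Bᵀ)⁻¹B, the reflection v⁺ = (I−2P)v⁻ is given componentwise by: v₁⁺ = ((mr²−J)/J′)v₁⁻ + (2Jr/J′)ω₂⁻, v₂⁺ = ((mr²−J)/J′)v₂⁻ − (2Jr/J′)ω₁⁻, v₃⁺ = −v₃⁻, ω₁⁺ = −(2rm/J′)v₂⁻ + ((J−mr²)/J′)ω₁⁻, ω₂⁺ = (2rm/J′)v₁⁻ + ((J−mr²)/J′)ω₂⁻, ω₃⁺ = ω₃⁻, where J′ = J + r²m. -/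
open Matrix

@[simp] lemma my_cons_val_five {α : Type*} (a : α) (u : Fin 5 → α) :
    Matrix.vecCons a u 5 = u 4 := rfl

set_option maxHeartbeats 1000000 in
/-- Ball–floor collision: with `G = diag(m,m,m,J,J,J)`, the no-slip constraint
matrix `B`, and `P = G⁻¹ Bᵀ (B G⁻¹ Bᵀ)⁻¹ B`, the reflection `v⁺ = (I - 2P) v⁻`
is given componentwise by the formulas of Theorem `cvb6`. -/
theorem ball_floor_collision (m r J : ℝ) (hm : 0 < m) (hr : 0 < r)
    (hJ : 0 < J) (v₁ v₂ v₃ ω₁ ω₂ ω₃ : ℝ) :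
    let G : Matrix (Fin 6) (Fin 6) ℝ := Matrix.diagonal ![m, m, m, J, J, J]
    let B : Matrix (Fin 3) (Fin 6) ℝ :=
      !![1, 0, 0, 0, -r, 0; 0, 1, 0, r, 0, 0; 0, 0, 1, 0, 0, 0]
    let P := G⁻¹ * Bᵀ * (B * G⁻¹ * Bᵀ)⁻¹ * B
    let J' := J + r ^ 2 * m
    let vminus : Fin 6 → ℝ := ![v₁, v₂, v₃, ω₁, ω₂, ω₃]
    let vplus := (1 - (2 : ℝ) • P) *ᵥ vminus
    vplus 0 = ((m * r ^ 2 - J) / J') * v₁ + (2 * J * r / J') * ω₂ ∧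
    vplus 1 = ((m * r ^ 2 - J) / J') * v₂ - (2 * J * r / J') * ω₁ ∧
    vplus 2 = -v₃ ∧
    vplus 3 = -(2 * r * m / J') * v₂ + ((J - m * r ^ 2) / J') * ω₁ ∧
    vplus 4 = (2 * r * m / J') * v₁ + ((J - m * r ^ 2) / J') * ω₂ ∧
    vplus 5 = ω₃ := by
  intro G B P J' vminus vplus
  have hm' : m ≠ 0 := hm.ne'
  have hJ' : J ≠ 0 := hJ.ne'
  have hJJ : J + r ^ 2 * m ≠ 0 := by positivity
  have hGinv : G⁻¹ = Matrix.diagonal ![m⁻¹, m⁻¹, m⁻¹, J⁻¹, J⁻¹, J⁻¹] := by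
    apply Matrix.inv_eq_right_inv
    rw [show G = Matrix.diagonal ![m, m, m, J, J, J] from rfl,
      Matrix.diagonal_mul_diagonal]
    ext i j
    fin_cases i <;> fin_cases j <;>
      simp [Matrix.diagonal_apply, Matrix.one_apply, mul_inv_cancel₀, hm', hJ']
  have hM : B * G⁻¹ * Bᵀ
      = !![m⁻¹ + r ^ 2 * J⁻¹, 0, 0; 0, m⁻¹ + r ^ 2 * J⁻¹, 0; 0, 0, m⁻¹] := by
    rw [hGinv]
    ext i j
    fin_cases i <;> fin_cases j <;>
      · simp [B, Matrix.mul_apply, Fin.sum_univ_six, Matrix.vecMul_diagonal,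
          Matrix.vecHead, Matrix.vecTail]
        try ring
  have hMinv : (B * G⁻¹ * Bᵀ)⁻¹
      = !![m * J / J', 0, 0; 0, m * J / J', 0; 0, 0, m] := by
    rw [hM]
    apply Matrix.inv_eq_right_inv
    ext i j
    fin_cases i <;> fin_cases j <;>
      · simp [Matrix.mul_apply, Fin.sum_univ_three, Matrix.one_apply, J',
          Matrix.vecHead, Matrix.vecTail]
        try field_simp
        try ring
  have hP : P = !![J/J', 0, 0, 0, -(r*J/J'), 0;
      0, J/J', 0, r*J/J', 0, 0;
      0, 0, 1, 0, 0, 0;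
      0, r*m/J', 0, r^2*m/J', 0, 0;
      -(r*m/J'), 0, 0, 0, r^2*m/J', 0;
      0, 0, 0, 0, 0, 0] := by
    show G⁻¹ * Bᵀ * (B * G⁻¹ * Bᵀ)⁻¹ * B = _
    rw [hMinv, hGinv]
    ext i j
    fin_cases i <;> fin_cases j <;>
      · simp [B, Matrix.mul_apply, Fin.sum_univ_six, Fin.sum_univ_three,
          Matrix.vecMul_diagonal, Matrix.diagonal_mul, Matrix.vecHead, Matrix.vecTail, J']
        try field_simp
        try ring
  refine ⟨?_, ?_, ?_, ?_, ?_, ?_⟩ <;>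
  · show ((1 - (2 : ℝ) • P) *ᵥ vminus) _ = _
    rw [hP]
    simp [Matrix.mulVec, dotProduct, Fin.sum_univ_six, Matrix.sub_apply, Matrix.smul_apply,
      Matrix.one_apply, vminus, Matrix.vecHead, Matrix.vecTail, J']
    try field_simp
    try ring
end

section
/- The ball–floor collision conserves the angular momentum about the contact point: with CS = (0,0,r) (vector from contact point to center) and the collision formulas of the ball–floor collision, m·(CS × v⁺) + J·ω⁺ = m·(CS × v⁻) + J·ω⁻, where × is the cross product in ℝ³. -/
open Matrix

/-- The ball–floor collision conserves the angular momentum about the contact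
point: `m (CS × v⁺) + J ω⁺ = m (CS × v⁻) + J ω⁻` with `CS = (0, 0, r)`. -/
theorem ball_floor_angular_momentum (m r J : ℝ) (hm : 0 < m) (hr : 0 < r)
    (hJ : 0 < J) (v₁ v₂ v₃ ω₁ ω₂ ω₃ v₁' v₂' v₃' ω₁' ω₂' ω₃' J' : ℝ)
    (hJ' : J' = J + r ^ 2 * m)
    (h1 : v₁' = ((m * r ^ 2 - J) / J') * v₁ + (2 * J * r / J') * ω₂)
    (h2 : v₂' = ((m * r ^ 2 - J) / J') * v₂ - (2 * J * r / J') * ω₁)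
    (h3 : v₃' = -v₃)
    (h4 : ω₁' = -(2 * r * m / J') * v₂ + ((J - m * r ^ 2) / J') * ω₁)
    (h5 : ω₂' = (2 * r * m / J') * v₁ + ((J - m * r ^ 2) / J') * ω₂)
    (h6 : ω₃' = ω₃) :
    let CS : Fin 3 → ℝ := ![0, 0, r]
    m • (crossProduct CS ![v₁', v₂', v₃']) + J • ![ω₁', ω₂', ω₃'] =
    m • (crossProduct CS ![v₁, v₂, v₃]) + J • ![ω₁, ω₂, ω₃] := by
  have hJ'0 : J' ≠ 0 := by nlinarith [sq_nonneg r, mul_pos hr hr]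
  intro CS
  have hJ'0 : J' ≠ 0 := by nlinarith [mul_pos (mul_pos hr hr) hm]
  funext i
  fin_cases i <;>
    simp [CS, crossProduct, h1, h2, h3, h4, h5, h6, smul_eq_mul] <;>
    field_simp [hJ'] <;> (try rw [hJ']) <;> ring
end
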